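/- The eigenvalues of the k×k matrix m(z) whose first row is all ones, whose subdiagonal entries are all equal to z, and all other entries zero, are exactly z·λ where λ ranges over the roots of λ^k − z^{-1}(λ^{k−1} + ⋯ + λ + 1). -/

import Mathlib

open Polynomial

lemma sum_inv_pow' (k : ℕ) (l : ℂ) (hl : l ≠ 0) :
    ∑ i ∈ Finset.range k, (l⁻¹) ^ i = (∑ i ∈ Finset.range k, l ^ i) * (l⁻¹) ^ (k - 1) := by
  rw [← Finset.sum_range_reflect (fun i => (l⁻¹) ^ i) k, Finset.sum_mul]
  refine Finset.sum_congr rfl fun i hi => ?_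
  rw [Finset.mem_range] at hi
  have h1 : i ≤ k - 1 := Nat.le_sub_one_of_lt hi
  have h2 : k - 1 = (k - 1 - i) + i := (Nat.sub_add_cancel h1).symm
  conv_rhs => rw [h2, pow_add]
  rw [mul_comm (l ^ i), mul_assoc, inv_pow l i, inv_mul_cancel₀ (pow_ne_zero i hl), mul_one]

lemma helper_iff (k : ℕ) (hk : 1 ≤ k) (z l : ℂ) (hl : l ≠ 0) :
    (∑ i ∈ Finset.range k, (l⁻¹) ^ i = z * l) ↔
      (∑ i ∈ Finset.range k, l ^ i) = z * l ^ k := by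
  rw [sum_inv_pow' k l hl, inv_pow, mul_inv_eq_iff_eq_mul₀ (pow_ne_zero _ hl)]
  have : z * l * l ^ (k - 1) = z * l ^ k := by
    rw [mul_assoc, ← pow_succ', Nat.sub_add_cancel hk]
  rw [this]

/-- The eigenvalues of the `k × k` matrix `m(z)` (first row all ones, subdiagonal
entries `z`, other entries `0`) are exactly `z·λ` where `λ` ranges over the roots of
`λ^k - z⁻¹ (λ^{k-1} + ⋯ + λ + 1)`. -/
theorem stmt_4 (k : ℕ) (hk : 2 ≤ k) (z : ℂ) (hz : z ≠ 0) :
    ∀ μ : ℂ,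
      μ ∈ spectrum ℂ
        (Matrix.of fun i j : Fin k =>
          if (i : ℕ) = 0 then (1 : ℂ) else if (i : ℕ) = (j : ℕ) + 1 then z else 0) ↔
      ∃ l : ℂ,
        (X ^ k - C z⁻¹ * ∑ i ∈ Finset.range k, X ^ i : Polynomial ℂ).IsRoot l ∧ μ = z * l := by
  intro μ
  have hk0 : 0 < k := by omega
  set M : Matrix (Fin k) (Fin k) ℂ := Matrix.of fun i j : Fin k =>
          if (i : ℕ) = 0 then (1 : ℂ) else if (i : ℕ) = (j : ℕ) + 1 then z else 0 with hM
  -- rewrite IsRoot condition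
  have hroot : ∀ l : ℂ,
      (X ^ k - C z⁻¹ * ∑ i ∈ Finset.range k, X ^ i : Polynomial ℂ).IsRoot l ↔
      l ^ k - z⁻¹ * ∑ i ∈ Finset.range k, l ^ i = 0 := by
    intro l
    unfold IsRoot
    simp [eval_finset_sum]
  have key : μ ∈ spectrum ℂ M ↔ ∃ v : Fin k → ℂ, v ≠ 0 ∧ ∀ i, M.mulVec v i = μ * v i := by
    rw [spectrum.mem_iff, Matrix.isUnit_iff_isUnit_det, isUnit_iff_ne_zero, not_ne_iff,
        ← Matrix.exists_mulVec_eq_zero_iff]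
    constructor
    · rintro ⟨v, hv, hMv⟩
      refine ⟨v, hv, fun i => ?_⟩
      have := congrFun hMv i
      rw [Matrix.sub_mulVec, Algebra.algebraMap_eq_smul_one, Matrix.smul_mulVec,
        Matrix.one_mulVec] at this
      have := sub_eq_zero.mp this
      simpa using this.symm
    · rintro ⟨v, hv, hMv⟩
      refine ⟨v, hv, ?_⟩
      funext i
      rw [Matrix.sub_mulVec, Algebra.algebraMap_eq_smul_one, Matrix.smul_mulVec,
        Matrix.one_mulVec]
      simp [hMv i, Pi.sub_apply]
  have row0 : ∀ v : Fin k → ℂ, M.mulVec v ⟨0, hk0⟩ = ∑ j, v j := by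
    intro v
    simp [hM, Matrix.mulVec, dotProduct]
  have rowS : ∀ (v : Fin k → ℂ) (i : ℕ) (hi : i + 1 < k),
      M.mulVec v ⟨i + 1, hi⟩ = z * v ⟨i, by omega⟩ := by
    intro v i hi
    simp only [hM, Matrix.mulVec, dotProduct, Matrix.of_apply]
    rw [Finset.sum_eq_single (⟨i, by omega⟩ : Fin k)]
    · simp
    · intro j _ hj
      have h1 : ¬ ((⟨i + 1, hi⟩ : Fin k) : ℕ) = 0 := by simp
      have h2 : ¬ ((⟨i + 1, hi⟩ : Fin k) : ℕ) = (j : ℕ) + 1 := by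
        simp only [Fin.val_mk]
        intro h
        exact hj (Fin.ext (by simp only [Fin.val_mk]; omega))
      rw [if_neg h1, if_neg h2, zero_mul]
    · simp
  rw [key]
  constructor
  · rintro ⟨v, hv, hMv⟩
    have hμ : μ ≠ 0 := by
      rintro rfl
      apply hv
      have hzero : ∀ n (hn : n < k - 1), v ⟨n, by omega⟩ = 0 := by
        intro n hn
        have := hMv ⟨n + 1, by omega⟩
        rw [rowS v n (by omega)] at this
        simpa [hz] using this
      have hlast : v ⟨k - 1, by omega⟩ = 0 := by
        have h0 := hMv ⟨0, hk0⟩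
        rw [row0 v, zero_mul] at h0
        have hs : ∑ j, v j = v ⟨k - 1, by omega⟩ := by
          rw [Finset.sum_eq_single (⟨k - 1, by omega⟩ : Fin k)]
          · intro j _ hj
            have hjlt : (j : ℕ) < k - 1 := by
              rcases Nat.lt_or_ge (j : ℕ) (k - 1) with h | h
              · exact h
              · exfalso; apply hj; apply Fin.ext; simp only [Fin.val_mk]
                have := j.isLt; omega
            have := hzero j hjlt
            simpa using this
          · simp
        rw [hs] at h0; exact h0
      funext j
      simp only [Pi.zero_apply]
      rcases Nat.lt_or_ge (j : ℕ) (k - 1) with h | h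
      · have := hzero j h; simpa using this
      · have hje : (j : ℕ) = k - 1 := by have := j.isLt; omega
        have : j = ⟨k - 1, by omega⟩ := Fin.ext (by simp [hje])
        rw [this]; exact hlast
    have hgeo : ∀ n (hn : n < k), v ⟨n, hn⟩ = (z / μ) ^ n * v ⟨0, hk0⟩ := by
      intro n
      induction n with
      | zero => intro hn; simp
      | succ m ih =>
        intro hn
        have hm : m < k := by omega
        have heq := hMv ⟨m + 1, hn⟩
        rw [rowS v m hn] at heq
        rw [ih hm] at heq
        have hv1 : v ⟨m + 1, hn⟩ = (z * ((z / μ) ^ m * v ⟨0, hk0⟩)) / μ :=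
          eq_div_of_mul_eq hμ (by linear_combination -heq)
        rw [hv1, pow_succ]
        ring
    have hv0 : v ⟨0, hk0⟩ ≠ 0 := by
      intro h0
      apply hv
      funext j
      have := hgeo j j.isLt
      simp only [Pi.zero_apply]
      rw [Fin.eta] at this
      rw [this, h0, mul_zero]
    have hsum : (∑ i ∈ Finset.range k, (z / μ) ^ i) = μ := by
      have h0 := hMv ⟨0, hk0⟩
      rw [row0 v] at h0
      have hs : ∑ j, v j = (∑ i ∈ Finset.range k, (z / μ) ^ i) * v ⟨0, hk0⟩ := by
        rw [Finset.sum_mul, ← Fin.sum_univ_eq_sum_range (fun i => (z / μ) ^ i * v ⟨0, hk0⟩) k]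
        refine Finset.sum_congr rfl fun j _ => ?_
        have := hgeo j j.isLt
        rw [Fin.eta] at this
        rw [this]
      rw [hs] at h0
      exact mul_right_cancel₀ hv0 h0
    set l := μ / z with hldef
    have hl : l ≠ 0 := div_ne_zero hμ hz
    have hμl : μ = z * l := by rw [hldef]; field_simp
    refine ⟨l, ?_, hμl⟩
    rw [hroot]
    have hzd : z / μ = l⁻¹ := by rw [hldef]; field_simp
    rw [hzd, hμl] at hsum
    rw [helper_iff k (by omega) z l hl] at hsum
    rw [hsum]
    field_simp
    ring
  · rintro ⟨l, hlr, rfl⟩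
    rw [hroot] at hlr
    have hl : l ≠ 0 := by
      rintro rfl
      rw [zero_pow (by omega), zero_sub, neg_eq_zero] at hlr
      rw [Finset.sum_eq_single 0] at hlr
      · simp at hlr; exact hz hlr
      · intro b _ hb; exact zero_pow hb
      · simp [Finset.mem_range]; omega
    have hsum : ∑ i ∈ Finset.range k, (l⁻¹) ^ i = z * l := by
      rw [helper_iff k (by omega) z l hl]
      have := sub_eq_zero.mp hlr
      rw [this]; field_simp
    refine ⟨fun i => (l⁻¹) ^ (i : ℕ), ?_, ?_⟩
    · intro h
      have := congrFun h ⟨0, hk0⟩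
      simp at this
    · rintro ⟨i, hi⟩
      match i, hi with
      | 0, hi =>
        rw [row0]
        rw [Fin.sum_univ_eq_sum_range (fun j => (l⁻¹) ^ j) k]
        simpa using hsum
      | (m + 1), hi =>
        rw [rowS _ m hi]
        simp only [Fin.val_mk]
        rw [pow_succ]
        field_simp
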